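/- arXiv:1605.02336 — 2 statements merged into one kernel-verified Lean document; each statement's English description precedes it below -/
import Mathlib

section
/- Let n ∈ ℝ, k_n = n − 1, and k₀, k₁, k₂ ∈ ℝ. On Ω = {r > 0}, define J_a3' = 2k₀ p_φ + k₂ P₁ − k₁ P₂ and the two real functions J₂ = r^{2(n−1)}[(r² p_r² − p_φ²) cos(2k_n φ) + 2 r p_r p_φ sin(2k_n φ)] + (2k₀/r^{2k_n}) cos(2k_n φ) + (2/r^{k_n})(k₁ cos(k_n φ) − k₂ sin(k_n φ)) and J₃ = r^{2(n−1)}[(r² p_r² − p_φ²) sin(2k_n φ) − 2 r p_r p_φ cos(2k_n φ)] + (2k₀/r^{2k_n}) sin(2k_n φ) + (2/r^{k_n})(k₁ sin(k_n φ) + k₂ cos(k_n φ)). Then at every point of Ω: {J_a3', J₂} = 4(n − 1)(k₀ J₃ + k₁ k₂) and {J_a3', J₃} = −2(n − 1)(2k₀ J₂ + k₁² − k₂²). -/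
open Real

/-- Canonical Poisson bracket on the phase space Ω ⊆ ℝ⁴ with coordinates (r, φ, p_r, p_φ):
{F,G} = F_r G_{p_r} − F_{p_r} G_r + F_φ G_{p_φ} − F_{p_φ} G_φ. -/
noncomputable def pb (F G : ℝ → ℝ → ℝ → ℝ → ℝ) (r φ pr pφ : ℝ) : ℝ :=
  (deriv (fun x => F x φ pr pφ) r) * (deriv (fun x => G r φ x pφ) pr)
    - (deriv (fun x => F r φ x pφ) pr) * (deriv (fun x => G x φ pr pφ) r)
    + (deriv (fun x => F r x pr pφ) φ) * (deriv (fun x => G r φ pr x) pφ)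
    - (deriv (fun x => F r φ pr x) pφ) * (deriv (fun x => G r x pr pφ) φ)

/-- Kinetic Hamiltonian T_n = (1/2) r^(2n) (p_r² + p_φ²/r²) of the
position dependent mass m_n = 1/r^(2n). -/
noncomputable def Tkin (n : ℝ) (r φ pr pφ : ℝ) : ℝ :=
  (1/2) * r ^ (2*n) * (pr^2 + pφ^2 / r^2)

/-- Noether momentum P₁ = rⁿ (p_r cos(k_n φ) + (p_φ/r) sin(k_n φ)), k_n = n − 1. -/
noncomputable def P1 (n : ℝ) (r φ pr pφ : ℝ) : ℝ :=
  r ^ n * (pr * cos ((n-1)*φ) + (pφ / r) * sin ((n-1)*φ))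

/-- Noether momentum P₂ = rⁿ (p_r sin(k_n φ) − (p_φ/r) cos(k_n φ)), k_n = n − 1. -/
noncomputable def P2 (n : ℝ) (r φ pr pφ : ℝ) : ℝ :=
  r ^ n * (pr * sin ((n-1)*φ) - (pφ / r) * cos ((n-1)*φ))

/-- J₂: real part of the complex integral M_n conj(N_φ). -/
noncomputable def J2fun (n k0 k1 k2 : ℝ) (r φ pr pφ : ℝ) : ℝ :=
  r ^ (2*(n-1)) * ((r^2 * pr^2 - pφ^2) * cos (2*(n-1)*φ)
      + 2 * r * pr * pφ * sin (2*(n-1)*φ))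
    + (2*k0 / r ^ (2*(n-1))) * cos (2*(n-1)*φ)
    + (2 / r ^ (n-1)) * (k1 * cos ((n-1)*φ) - k2 * sin ((n-1)*φ))

/-- J₃: imaginary part of the complex integral M_n conj(N_φ). -/
noncomputable def J3fun (n k0 k1 k2 : ℝ) (r φ pr pφ : ℝ) : ℝ :=
  r ^ (2*(n-1)) * ((r^2 * pr^2 - pφ^2) * sin (2*(n-1)*φ)
      - 2 * r * pr * pφ * cos (2*(n-1)*φ))
    + (2*k0 / r ^ (2*(n-1))) * sin (2*(n-1)*φ)
    + (2 / r ^ (n-1)) * (k1 * sin ((n-1)*φ) + k2 * cos ((n-1)*φ))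

/-- The linear integral J_a3' = 2k₀ p_φ + k₂ P₁ − k₁ P₂. -/
noncomputable def Ja3p (n k0 k1 k2 : ℝ) (r φ pr pφ : ℝ) : ℝ :=
  2 * k0 * pφ + k2 * P1 n r φ pr pφ - k1 * P2 n r φ pr pφ

private lemma hid (x : ℝ) : HasDerivAt (fun y : ℝ => y) 1 x := hasDerivAt_id' x

section Derivs

variable (n k0 k1 k2 r φ pr pφ : ℝ)

lemma dJa_r (hr : 0 < r) :
    deriv (fun x => Ja3p n k0 k1 k2 x φ pr pφ) r
      = k2 * (n * r^(n-1) * (pr * cos ((n-1)*φ) + pφ/r * sin ((n-1)*φ))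
              - r^n * (pφ * sin ((n-1)*φ) / r^2))
        - k1 * (n * r^(n-1) * (pr * sin ((n-1)*φ) - pφ/r * cos ((n-1)*φ))
              + r^n * (pφ * cos ((n-1)*φ) / r^2)) := by
  have hxn : HasDerivAt (fun x : ℝ => x ^ n) (n * r ^ (n-1)) r :=
    Real.hasDerivAt_rpow_const (Or.inl hr.ne')
  have hdiv : HasDerivAt (fun x : ℝ => pφ / x) ((0 * r - pφ * 1)/r^2) r :=
    (hasDerivAt_const r pφ).div (hasDerivAt_id r) hr.ne'
  have h1 := hxn.mul ((hdiv.mul_const (sin ((n-1)*φ))).const_add (pr * cos ((n-1)*φ)))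
  have h2 := hxn.mul ((hdiv.mul_const (cos ((n-1)*φ))).const_sub (pr * sin ((n-1)*φ)))
  have h := ((h1.const_mul k2).const_add (2*k0*pφ)).sub (h2.const_mul k1)
  simp only [Ja3p, P1, P2]
  refine h.deriv.trans ?_; ring

lemma dJa_pr :
    deriv (fun x => Ja3p n k0 k1 k2 r φ x pφ) pr
      = r^n * cos ((n-1)*φ) * k2 - r^n * sin ((n-1)*φ) * k1 := by
  have h1 := (((hid pr).mul_const (cos ((n-1)*φ))).add_const
      (pφ/r * sin ((n-1)*φ))).const_mul (r^n)
  have h2 := (((hid pr).mul_const (sin ((n-1)*φ))).sub_const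
      (pφ/r * cos ((n-1)*φ))).const_mul (r^n)
  have h := ((h1.const_mul k2).const_add (2*k0*pφ)).sub (h2.const_mul k1)
  simp only [Ja3p, P1, P2]
  refine h.deriv.trans ?_; ring

lemma dJa_pp :
    deriv (fun x => Ja3p n k0 k1 k2 r φ pr x) pφ
      = 2*k0 + k2 * (r^n * (sin ((n-1)*φ) / r)) + k1 * (r^n * (cos ((n-1)*φ) / r)) := by
  have h1 := ((((hid pφ).div_const r).mul_const (sin ((n-1)*φ))).const_add
      (pr * cos ((n-1)*φ))).const_mul (r^n)
  have h2 := ((((hid pφ).div_const r).mul_const (cos ((n-1)*φ))).const_sub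
      (pr * sin ((n-1)*φ))).const_mul (r^n)
  have h := (((hid pφ).const_mul (2*k0)).add (h1.const_mul k2)).sub (h2.const_mul k1)
  simp only [Ja3p, P1, P2]
  refine h.deriv.trans ?_; ring

lemma dJa_phi :
    deriv (fun x => Ja3p n k0 k1 k2 r x pr pφ) φ
      = k2 * (r^n * (-(pr * sin ((n-1)*φ)) * (n-1) + pφ/r * cos ((n-1)*φ) * (n-1)))
        - k1 * (r^n * (pr * cos ((n-1)*φ) * (n-1) + pφ/r * sin ((n-1)*φ) * (n-1))) := by
  have hc : HasDerivAt (fun x : ℝ => cos ((n-1)*x)) (-sin ((n-1)*φ) * (n-1)) φ := by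
    simpa using ((hasDerivAt_id φ).const_mul (n-1)).cos
  have hs : HasDerivAt (fun x : ℝ => sin ((n-1)*x)) (cos ((n-1)*φ) * (n-1)) φ := by
    simpa using ((hasDerivAt_id φ).const_mul (n-1)).sin
  have h1 := ((hc.const_mul pr).add (hs.const_mul (pφ/r))).const_mul (r^n)
  have h2 := ((hs.const_mul pr).sub (hc.const_mul (pφ/r))).const_mul (r^n)
  have h := ((h1.const_mul k2).const_add (2*k0*pφ)).sub (h2.const_mul k1)
  simp only [Ja3p, P1, P2]
  refine h.deriv.trans ?_; ring

lemma dJ2_pr :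
    deriv (fun x => J2fun n k0 k1 k2 r φ x pφ) pr
      = r^(2*(n-1)) * (r^2*(2*pr)*cos (2*(n-1)*φ) + 2*r*pφ*sin (2*(n-1)*φ)) := by
  have h1 := (((hasDerivAt_pow 2 pr).const_mul (r^2)).sub_const (pφ^2)).mul_const
      (cos (2*(n-1)*φ))
  have h2 := ((((hid pr).const_mul (2*r)).mul_const pφ).mul_const
      (sin (2*(n-1)*φ)))
  have h := (((h1.add h2).const_mul (r^(2*(n-1)))).add_const
      (2*k0 / r^(2*(n-1)) * cos (2*(n-1)*φ))).add_const
      (2 / r^(n-1) * (k1 * cos ((n-1)*φ) - k2 * sin ((n-1)*φ)))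
  simp only [J2fun]
  refine h.deriv.trans ?_; norm_num

lemma dJ2_pp :
    deriv (fun x => J2fun n k0 k1 k2 r φ pr x) pφ
      = r^(2*(n-1)) * (-(2*pφ)*cos (2*(n-1)*φ) + 2*r*pr*sin (2*(n-1)*φ)) := by
  have h1 := (((hasDerivAt_pow 2 pφ).const_sub (r^2*pr^2)).mul_const (cos (2*(n-1)*φ)))
  have h2 := (((hid pφ).const_mul (2*r*pr)).mul_const (sin (2*(n-1)*φ)))
  have h := (((h1.add h2).const_mul (r^(2*(n-1)))).add_const
      (2*k0 / r^(2*(n-1)) * cos (2*(n-1)*φ))).add_const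
      (2 / r^(n-1) * (k1 * cos ((n-1)*φ) - k2 * sin ((n-1)*φ)))
  simp only [J2fun]
  refine h.deriv.trans ?_; norm_num

lemma dJ2_phi :
    deriv (fun x => J2fun n k0 k1 k2 r x pr pφ) φ
      = r^(2*(n-1)) * ((r^2*pr^2 - pφ^2) * (-sin (2*(n-1)*φ)) * (2*(n-1))
            + 2*r*pr*pφ * cos (2*(n-1)*φ) * (2*(n-1)))
        + 2*k0 / r^(2*(n-1)) * (-sin (2*(n-1)*φ)) * (2*(n-1))
        + 2 / r^(n-1) * (-(k1 * sin ((n-1)*φ)) * (n-1) - k2 * cos ((n-1)*φ) * (n-1)) := by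
  have hc : HasDerivAt (fun x : ℝ => cos ((n-1)*x)) (-sin ((n-1)*φ) * (n-1)) φ := by
    simpa using ((hasDerivAt_id φ).const_mul (n-1)).cos
  have hs : HasDerivAt (fun x : ℝ => sin ((n-1)*x)) (cos ((n-1)*φ) * (n-1)) φ := by
    simpa using ((hasDerivAt_id φ).const_mul (n-1)).sin
  have hc2 : HasDerivAt (fun x : ℝ => cos (2*(n-1)*x)) (-sin (2*(n-1)*φ) * (2*(n-1))) φ := by
    simpa using ((hasDerivAt_id φ).const_mul (2*(n-1))).cos
  have hs2 : HasDerivAt (fun x : ℝ => sin (2*(n-1)*x)) (cos (2*(n-1)*φ) * (2*(n-1))) φ := by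
    simpa using ((hasDerivAt_id φ).const_mul (2*(n-1))).sin
  have hA := ((hc2.const_mul (r^2*pr^2 - pφ^2)).add (hs2.const_mul (2*r*pr*pφ))).const_mul
      (r^(2*(n-1)))
  have hB := hc2.const_mul (2*k0 / r^(2*(n-1)))
  have hC := ((hc.const_mul k1).sub (hs.const_mul k2)).const_mul (2 / r^(n-1))
  have h := (hA.add hB).add hC
  simp only [J2fun]
  refine h.deriv.trans ?_; ring

lemma dJ2_r (hr : 0 < r) :
    deriv (fun x => J2fun n k0 k1 k2 x φ pr pφ) r
      = (2*(n-1)) * r^(2*(n-1)-1) * ((r^2*pr^2 - pφ^2) * cos (2*(n-1)*φ)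
            + 2*r*pr*pφ * sin (2*(n-1)*φ))
        + r^(2*(n-1)) * (2*r*pr^2 * cos (2*(n-1)*φ) + 2*pr*pφ * sin (2*(n-1)*φ))
        - 2*k0 * ((2*(n-1)) * r^(2*(n-1)-1)) / (r^(2*(n-1)))^2 * cos (2*(n-1)*φ)
        - 2 * ((n-1) * r^(n-1-1)) / (r^(n-1))^2
            * (k1 * cos ((n-1)*φ) - k2 * sin ((n-1)*φ)) := by
  have hxa : HasDerivAt (fun x : ℝ => x ^ (2*(n-1))) ((2*(n-1)) * r ^ (2*(n-1)-1)) r :=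
    Real.hasDerivAt_rpow_const (Or.inl hr.ne')
  have hxk : HasDerivAt (fun x : ℝ => x ^ (n-1)) ((n-1) * r ^ (n-1-1)) r :=
    Real.hasDerivAt_rpow_const (Or.inl hr.ne')
  have h11 := (((hasDerivAt_pow 2 r).mul_const (pr^2)).sub_const (pφ^2)).mul_const
      (cos (2*(n-1)*φ))
  have h12 := ((((hid r).const_mul 2).mul_const pr).mul_const pφ).mul_const
      (sin (2*(n-1)*φ))
  have hA := hxa.mul (h11.add h12)
  have hB := ((hasDerivAt_const r (2*k0)).div hxa (Real.rpow_pos_of_pos hr _).ne').mul_const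
      (cos (2*(n-1)*φ))
  have hC := ((hasDerivAt_const r 2).div hxk (Real.rpow_pos_of_pos hr _).ne').mul_const
      (k1 * cos ((n-1)*φ) - k2 * sin ((n-1)*φ))
  have h := (hA.add hB).add hC
  simp only [J2fun]
  refine h.deriv.trans ?_; norm_num; ring

lemma dJ3_pr :
    deriv (fun x => J3fun n k0 k1 k2 r φ x pφ) pr
      = r^(2*(n-1)) * (r^2*(2*pr)*sin (2*(n-1)*φ) - 2*r*pφ*cos (2*(n-1)*φ)) := by
  have h1 := (((hasDerivAt_pow 2 pr).const_mul (r^2)).sub_const (pφ^2)).mul_const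
      (sin (2*(n-1)*φ))
  have h2 := ((((hid pr).const_mul (2*r)).mul_const pφ).mul_const
      (cos (2*(n-1)*φ)))
  have h := (((h1.sub h2).const_mul (r^(2*(n-1)))).add_const
      (2*k0 / r^(2*(n-1)) * sin (2*(n-1)*φ))).add_const
      (2 / r^(n-1) * (k1 * sin ((n-1)*φ) + k2 * cos ((n-1)*φ)))
  simp only [J3fun]
  refine h.deriv.trans ?_; norm_num

lemma dJ3_pp :
    deriv (fun x => J3fun n k0 k1 k2 r φ pr x) pφ
      = r^(2*(n-1)) * (-(2*pφ)*sin (2*(n-1)*φ) - 2*r*pr*cos (2*(n-1)*φ)) := by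
  have h1 := (((hasDerivAt_pow 2 pφ).const_sub (r^2*pr^2)).mul_const (sin (2*(n-1)*φ)))
  have h2 := (((hid pφ).const_mul (2*r*pr)).mul_const (cos (2*(n-1)*φ)))
  have h := (((h1.sub h2).const_mul (r^(2*(n-1)))).add_const
      (2*k0 / r^(2*(n-1)) * sin (2*(n-1)*φ))).add_const
      (2 / r^(n-1) * (k1 * sin ((n-1)*φ) + k2 * cos ((n-1)*φ)))
  simp only [J3fun]
  refine h.deriv.trans ?_; norm_num

lemma dJ3_phi :
    deriv (fun x => J3fun n k0 k1 k2 r x pr pφ) φ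
      = r^(2*(n-1)) * ((r^2*pr^2 - pφ^2) * cos (2*(n-1)*φ) * (2*(n-1))
            + 2*r*pr*pφ * sin (2*(n-1)*φ) * (2*(n-1)))
        + 2*k0 / r^(2*(n-1)) * cos (2*(n-1)*φ) * (2*(n-1))
        + 2 / r^(n-1) * (k1 * cos ((n-1)*φ) * (n-1) - k2 * sin ((n-1)*φ) * (n-1)) := by
  have hc : HasDerivAt (fun x : ℝ => cos ((n-1)*x)) (-sin ((n-1)*φ) * (n-1)) φ := by
    simpa using ((hasDerivAt_id φ).const_mul (n-1)).cos
  have hs : HasDerivAt (fun x : ℝ => sin ((n-1)*x)) (cos ((n-1)*φ) * (n-1)) φ := by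
    simpa using ((hasDerivAt_id φ).const_mul (n-1)).sin
  have hc2 : HasDerivAt (fun x : ℝ => cos (2*(n-1)*x)) (-sin (2*(n-1)*φ) * (2*(n-1))) φ := by
    simpa using ((hasDerivAt_id φ).const_mul (2*(n-1))).cos
  have hs2 : HasDerivAt (fun x : ℝ => sin (2*(n-1)*x)) (cos (2*(n-1)*φ) * (2*(n-1))) φ := by
    simpa using ((hasDerivAt_id φ).const_mul (2*(n-1))).sin
  have hA := ((hs2.const_mul (r^2*pr^2 - pφ^2)).sub (hc2.const_mul (2*r*pr*pφ))).const_mul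
      (r^(2*(n-1)))
  have hB := hs2.const_mul (2*k0 / r^(2*(n-1)))
  have hC := ((hs.const_mul k1).add (hc.const_mul k2)).const_mul (2 / r^(n-1))
  have h := (hA.add hB).add hC
  simp only [J3fun]
  refine h.deriv.trans ?_; ring

lemma dJ3_r (hr : 0 < r) :
    deriv (fun x => J3fun n k0 k1 k2 x φ pr pφ) r
      = (2*(n-1)) * r^(2*(n-1)-1) * ((r^2*pr^2 - pφ^2) * sin (2*(n-1)*φ)
            - 2*r*pr*pφ * cos (2*(n-1)*φ))
        + r^(2*(n-1)) * (2*r*pr^2 * sin (2*(n-1)*φ) - 2*pr*pφ * cos (2*(n-1)*φ))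
        - 2*k0 * ((2*(n-1)) * r^(2*(n-1)-1)) / (r^(2*(n-1)))^2 * sin (2*(n-1)*φ)
        - 2 * ((n-1) * r^(n-1-1)) / (r^(n-1))^2
            * (k1 * sin ((n-1)*φ) + k2 * cos ((n-1)*φ)) := by
  have hxa : HasDerivAt (fun x : ℝ => x ^ (2*(n-1))) ((2*(n-1)) * r ^ (2*(n-1)-1)) r :=
    Real.hasDerivAt_rpow_const (Or.inl hr.ne')
  have hxk : HasDerivAt (fun x : ℝ => x ^ (n-1)) ((n-1) * r ^ (n-1-1)) r :=
    Real.hasDerivAt_rpow_const (Or.inl hr.ne')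
  have h11 := (((hasDerivAt_pow 2 r).mul_const (pr^2)).sub_const (pφ^2)).mul_const
      (sin (2*(n-1)*φ))
  have h12 := ((((hid r).const_mul 2).mul_const pr).mul_const pφ).mul_const
      (cos (2*(n-1)*φ))
  have hA := hxa.mul (h11.sub h12)
  have hB := ((hasDerivAt_const r (2*k0)).div hxa (Real.rpow_pos_of_pos hr _).ne').mul_const
      (sin (2*(n-1)*φ))
  have hC := ((hasDerivAt_const r 2).div hxk (Real.rpow_pos_of_pos hr _).ne').mul_const
      (k1 * sin ((n-1)*φ) + k2 * cos ((n-1)*φ))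
  have h := (hA.add hB).add hC
  simp only [J3fun]
  refine h.deriv.trans ?_; norm_num; ring

end Derivs
set_option maxHeartbeats 4000000 in
/-- Poisson brackets of the linear integral J_a3' with J₂ and J₃ on Ω = {r > 0}:
{J_a3', J₂} = 4(n−1)(k₀ J₃ + k₁k₂) and {J_a3', J₃} = −2(n−1)(2k₀ J₂ + k₁² − k₂²). -/
theorem Ja3p_brackets (n k0 k1 k2 : ℝ) :
    ∀ r φ pr pφ : ℝ, 0 < r →
      pb (Ja3p n k0 k1 k2) (J2fun n k0 k1 k2) r φ pr pφ
        = 4 * (n-1) * (k0 * J3fun n k0 k1 k2 r φ pr pφ + k1 * k2) ∧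
      pb (Ja3p n k0 k1 k2) (J3fun n k0 k1 k2) r φ pr pφ
        = -2 * (n-1) * (2 * k0 * J2fun n k0 k1 k2 r φ pr pφ + k1^2 - k2^2) := by
  intro r φ pr pφ hr
  have hr' : r ≠ 0 := hr.ne'
  simp only [pb]
  rw [dJa_r n k0 k1 k2 r φ pr pφ hr, dJa_pr n k0 k1 k2 r φ pr pφ,
    dJa_pp n k0 k1 k2 r φ pr pφ, dJa_phi n k0 k1 k2 r φ pr pφ,
    dJ2_r n k0 k1 k2 r φ pr pφ hr, dJ2_pr n k0 k1 k2 r φ pr pφ,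
    dJ2_pp n k0 k1 k2 r φ pr pφ, dJ2_phi n k0 k1 k2 r φ pr pφ,
    dJ3_r n k0 k1 k2 r φ pr pφ hr, dJ3_pr n k0 k1 k2 r φ pr pφ,
    dJ3_pp n k0 k1 k2 r φ pr pφ, dJ3_phi n k0 k1 k2 r φ pr pφ]
  simp only [J2fun, J3fun]
  set t := r ^ (n-1) with hT
  have ht : (0:ℝ) < t := by rw [hT]; exact Real.rpow_pos_of_pos hr _
  have ht' : t ≠ 0 := ht.ne'
  have e1 : r ^ n = t * r := by
    rw [hT]; conv_lhs => rw [show n = (n-1) + 1 by ring]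
    rw [Real.rpow_add hr, Real.rpow_one]
  have e2 : r ^ (2*(n-1)) = t * t := by
    rw [hT]; conv_lhs => rw [show 2*(n-1) = (n-1) + (n-1) by ring]
    rw [Real.rpow_add hr]
  have e3 : r ^ (2*(n-1)-1) = t * t * r⁻¹ := by
    rw [hT]; conv_lhs => rw [show 2*(n-1)-1 = (n-1) + (n-1) + (-1) by ring]
    rw [Real.rpow_add hr, Real.rpow_add hr, Real.rpow_neg_one]
  have e5 : r ^ (n-1-1) = t * r⁻¹ := by
    rw [hT]; conv_lhs => rw [show n-1-1 = (n-1) + (-1) by ring]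
    rw [Real.rpow_add hr, Real.rpow_neg_one]
  simp only [e1, e2, e3, e5]
  rw [show 2*(n-1)*φ = 2*((n-1)*φ) by ring]
  rw [Real.cos_two_mul', Real.sin_two_mul]
  set c := Real.cos ((n-1)*φ) with hcd
  set s := Real.sin ((n-1)*φ) with hsd
  have hsq : s^2 = 1 - c^2 := by rw [hsd, hcd]; exact Real.sin_sq _
  have hs3 : s^3 = (1 - c^2) * s := by rw [← hsq]; ring
  have hs4 : s^4 = (1 - c^2)^2 := by rw [← hsq]; ring
  have hs5 : s^5 = (1 - c^2)^2 * s := by rw [← hsq]; ring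
  have hs6 : s^6 = (1 - c^2)^3 := by rw [← hsq]; ring
  constructor <;>
  · field_simp
    ring_nf
    simp only [hs6, hs5, hs4, hs3, hsq]
    ring
end

section
/- Let n ∈ ℝ, k_n = n − 1, m_n = (3n − 1)/2, and k₀, k₁, k₂ ∈ ℝ. Consider the Kepler-related Hamiltonian H_nd = T_n + k₀ r^{k_n} + r^{k_n/2}(k₁ cos(k_n φ/2) + k₂ sin(k_n φ/2)) on Ω = {r > 0}. Define the complex functions A_n = A_{n1} + i A_{n2}, with A_{n1} = r^{n−1} p_φ² + k₀ and A_{n2} = (1/r^{k_n/2})(r^{m_n} p_r p_φ + k₁ sin(k_n φ/2) − k₂ cos(k_n φ/2)), and N_φ = cos(k_n φ) + i sin(k_n φ). Then at every point of Ω: {A_n, H_nd} = −i (n − 1) λ_n A_n and {N_φ, H_nd} = i (n − 1) λ_n N_φ, where λ_n = r^{2(n−1)} p_φ. -/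
open Real

/-- Canonical Poisson bracket, extended to complex-valued functions on the phase
space Ω ⊆ ℝ⁴ with coordinates (r, φ, p_r, p_φ). -/
noncomputable def pbC (F G : ℝ → ℝ → ℝ → ℝ → ℂ) (r φ pr pφ : ℝ) : ℂ :=
  (deriv (fun x => F x φ pr pφ) r) * (deriv (fun x => G r φ x pφ) pr)
    - (deriv (fun x => F r φ x pφ) pr) * (deriv (fun x => G x φ pr pφ) r)
    + (deriv (fun x => F r x pr pφ) φ) * (deriv (fun x => G r φ pr x) pφ)
    - (deriv (fun x => F r φ pr x) pφ) * (deriv (fun x => G r x pr pφ) φ)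

/-- The Kepler-related Hamiltonian
H_nd = T_n + k₀ r^(k_n) + r^(k_n/2)(k₁ cos(k_n φ/2) + k₂ sin(k_n φ/2)),
regarded as a complex-valued function. -/
noncomputable def HndC (n k0 k1 k2 : ℝ) (r φ pr pφ : ℝ) : ℂ :=
  ((Tkin n r φ pr pφ + k0 * r ^ (n-1)
    + r ^ ((n-1)/2) * (k1 * cos ((n-1)*φ/2) + k2 * sin ((n-1)*φ/2)) : ℝ) : ℂ)

/-- The complex function A_n = A_{n1} + i A_{n2}, with A_{n1} = r^(n−1) p_φ² + k₀ and
A_{n2} = (1/r^(k_n/2))(r^(m_n) p_r p_φ + k₁ sin(k_n φ/2) − k₂ cos(k_n φ/2)),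
m_n = (3n−1)/2. -/
noncomputable def An (n k0 k1 k2 : ℝ) (r φ pr pφ : ℝ) : ℂ :=
  ((r ^ (n-1) * pφ^2 + k0 : ℝ) : ℂ)
    + Complex.I * (((1 / r ^ ((n-1)/2)) *
        (r ^ ((3*n-1)/2) * pr * pφ + k1 * sin ((n-1)*φ/2) - k2 * cos ((n-1)*φ/2)) : ℝ) : ℂ)

/-- The complex function N_φ = cos(k_n φ) + i sin(k_n φ). -/
noncomputable def Nphi (n : ℝ) (r φ pr pφ : ℝ) : ℂ :=
  ((cos ((n-1)*φ) : ℝ) : ℂ) + Complex.I * ((sin ((n-1)*φ) : ℝ) : ℂ)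

set_option maxHeartbeats 2000000
/-- {A_n, H_nd} = −i(n−1) λ_n A_n and {N_φ, H_nd} = i(n−1) λ_n N_φ,
with λ_n = r^(2(n−1)) p_φ, on Ω = {r > 0}. -/
theorem An_Nphi_brackets_Hnd (n k0 k1 k2 : ℝ) :
    ∀ r φ pr pφ : ℝ, 0 < r →
      pbC (An n k0 k1 k2) (HndC n k0 k1 k2) r φ pr pφ
        = -Complex.I * ((n-1 : ℝ) : ℂ) * ((r ^ (2*(n-1)) * pφ : ℝ) : ℂ)
            * An n k0 k1 k2 r φ pr pφ ∧
      pbC (Nphi n) (HndC n k0 k1 k2) r φ pr pφ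
        = Complex.I * ((n-1 : ℝ) : ℂ) * ((r ^ (2*(n-1)) * pφ : ℝ) : ℂ)
            * Nphi n r φ pr pφ := by
  intro r φ pr pφ hr
  have hrne : r ≠ 0 := hr.ne'
  set t := r ^ ((n-1)/2) with htdef
  have ht : (0:ℝ) < t := Real.rpow_pos_of_pos hr _
  have htne : t ≠ 0 := ht.ne'
  -- rpow decompositions
  have key : ∀ a : ℕ, r ^ ((n-1)/2 * (a:ℝ)) = t ^ a := by
    intro a
    rw [Real.rpow_mul hr.le, Real.rpow_natCast, htdef]
  have h2n : r ^ (2*n) = t^4 * r^2 := by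
    rw [show (2*n:ℝ) = (n-1)/2 * ((4:ℕ):ℝ) + ((2:ℕ):ℝ) by push_cast; ring,
      Real.rpow_add hr, key, Real.rpow_natCast]
  have h2n1 : r ^ (2*n-1) = t^4 * r := by
    rw [show (2*n-1:ℝ) = (n-1)/2 * ((4:ℕ):ℝ) + 1 by push_cast; ring,
      Real.rpow_add hr, key, Real.rpow_one]
  have hn1 : r ^ (n-1) = t^2 := by
    rw [show (n-1:ℝ) = (n-1)/2 * ((2:ℕ):ℝ) by push_cast; ring, key]
  have hn2 : r ^ (n-1-1) = t^2 / r := by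
    rw [show (n-1-1:ℝ) = (n-1)/2 * ((2:ℕ):ℝ) - 1 by push_cast; ring,
      Real.rpow_sub hr, key, Real.rpow_one]
  have hs1 : r ^ ((n-1)/2-1) = t / r := by
    rw [show ((n-1)/2-1:ℝ) = (n-1)/2 * ((1:ℕ):ℝ) - 1 by push_cast; ring,
      Real.rpow_sub hr, key, Real.rpow_one, pow_one]
  have hm : r ^ ((3*n-1)/2) = t^3 * r := by
    rw [show ((3*n-1)/2:ℝ) = (n-1)/2 * ((3:ℕ):ℝ) + 1 by push_cast; ring,
      Real.rpow_add hr, key, Real.rpow_one]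
  have hm1 : r ^ ((3*n-1)/2-1) = t^3 := by
    rw [show ((3*n-1)/2-1:ℝ) = (n-1)/2 * ((3:ℕ):ℝ) by push_cast; ring, key]
  have h2n2 : r ^ (2*(n-1)) = t^4 := by
    rw [show (2*(n-1):ℝ) = (n-1)/2 * ((4:ℕ):ℝ) by push_cast; ring, key]
  -- abbreviations for trig values
  -- derivative of H with respect to r
  have dHr : HasDerivAt
      (fun x : ℝ => 1/2 * x ^ (2*n) * (pr^2 + pφ^2 / x^2) + k0 * x ^ (n-1)
        + x ^ ((n-1)/2) * (k1 * Real.cos ((n-1)*φ/2) + k2 * Real.sin ((n-1)*φ/2)))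
      (n*t^4*r*pr^2 + (n-1)*t^4*pφ^2/r + k0*(n-1)*t^2/r
        + (n-1)/2*t*(k1 * Real.cos ((n-1)*φ/2) + k2 * Real.sin ((n-1)*φ/2))/r) r := by
    have hT := ((Real.hasDerivAt_rpow_const (p := 2*n) (Or.inl hrne)).const_mul (1/2:ℝ)).mul
      (((hasDerivAt_const r (pφ^2)).div (hasDerivAt_pow 2 r) (pow_ne_zero 2 hrne)).const_add (pr^2))
    have h := (hT.add ((Real.hasDerivAt_rpow_const (p := n-1) (Or.inl hrne)).const_mul k0)).add
      ((Real.hasDerivAt_rpow_const (p := (n-1)/2) (Or.inl hrne)).mul_const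
        (k1 * Real.cos ((n-1)*φ/2) + k2 * Real.sin ((n-1)*φ/2)))
    refine h.congr_deriv ?_
    simp only [h2n, h2n1, hn2, hs1, ← htdef, Pi.mul_apply, Pi.div_apply]
    field_simp
    ring
  have dHpr : HasDerivAt
      (fun x : ℝ => 1/2 * r ^ (2*n) * (x^2 + pφ^2 / r^2) + k0 * r ^ (n-1)
        + r ^ ((n-1)/2) * (k1 * Real.cos ((n-1)*φ/2) + k2 * Real.sin ((n-1)*φ/2)))
      (t^4*r^2*pr) pr := by
    have h := ((((hasDerivAt_pow 2 pr).add_const (pφ^2/r^2)).const_mul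
        (1/2 * r ^ (2*n))).add_const (k0 * r ^ (n-1))).add_const
        (r ^ ((n-1)/2) * (k1 * Real.cos ((n-1)*φ/2) + k2 * Real.sin ((n-1)*φ/2)))
    refine h.congr_deriv ?_
    simp only [h2n]
    push_cast
    ring
  have dHpp : HasDerivAt
      (fun x : ℝ => 1/2 * r ^ (2*n) * (pr^2 + x^2 / r^2) + k0 * r ^ (n-1)
        + r ^ ((n-1)/2) * (k1 * Real.cos ((n-1)*φ/2) + k2 * Real.sin ((n-1)*φ/2)))
      (t^4*pφ) pφ := by
    have h := ((((hasDerivAt_pow 2 pφ).div_const (r^2)).const_add (pr^2)).const_mul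
        (1/2 * r ^ (2*n))).add_const (k0 * r ^ (n-1)) |>.add_const
        (r ^ ((n-1)/2) * (k1 * Real.cos ((n-1)*φ/2) + k2 * Real.sin ((n-1)*φ/2)))
    refine h.congr_deriv ?_
    simp only [h2n]
    field_simp
    ring
  have hl : HasDerivAt (fun x : ℝ => (n-1)*x/2) ((n-1)*1/2) φ :=
    ((hasDerivAt_id φ).const_mul (n-1)).div_const 2
  have dHphi : HasDerivAt
      (fun x : ℝ => Tkin n r x pr pφ + k0 * r ^ (n-1)
        + r ^ ((n-1)/2) * (k1 * Real.cos ((n-1)*x/2) + k2 * Real.sin ((n-1)*x/2)))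
      ((n-1)/2*t*(k2 * Real.cos ((n-1)*φ/2) - k1 * Real.sin ((n-1)*φ/2))) φ := by
    have h := (((hl.cos.const_mul k1).add (hl.sin.const_mul k2)).const_mul
        (r ^ ((n-1)/2))).const_add (Tkin n r φ pr pφ + k0 * r ^ (n-1))
    refine h.congr_deriv ?_
    simp only [← htdef]
    ring
  -- complex versions of H derivatives (as deriv equalities)
  have eHr : deriv (fun x => HndC n k0 k1 k2 x φ pr pφ) r
      = ((n*t^4*r*pr^2 + (n-1)*t^4*pφ^2/r + k0*(n-1)*t^2/r
        + (n-1)/2*t*(k1 * Real.cos ((n-1)*φ/2) + k2 * Real.sin ((n-1)*φ/2))/r : ℝ) : ℂ) :=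
    HasDerivAt.deriv (dHr.ofReal_comp)
  have eHpr : deriv (fun x => HndC n k0 k1 k2 r φ x pφ) pr = ((t^4*r^2*pr : ℝ) : ℂ) :=
    HasDerivAt.deriv (dHpr.ofReal_comp)
  have eHpp : deriv (fun x => HndC n k0 k1 k2 r φ pr x) pφ = ((t^4*pφ : ℝ) : ℂ) :=
    HasDerivAt.deriv (dHpp.ofReal_comp)
  have eHphi : deriv (fun x => HndC n k0 k1 k2 r x pr pφ) φ
      = (((n-1)/2*t*(k2 * Real.cos ((n-1)*φ/2) - k1 * Real.sin ((n-1)*φ/2)) : ℝ) : ℂ) :=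
    HasDerivAt.deriv (dHphi.ofReal_comp)
  -- derivatives of A
  have dA1r : HasDerivAt (fun x : ℝ => x ^ (n-1) * pφ^2 + k0) ((n-1)*t^2*pφ^2/r) r := by
    have h := ((Real.hasDerivAt_rpow_const (p := n-1) (Or.inl hrne)).mul_const (pφ^2)).add_const k0
    refine h.congr_deriv ?_
    rw [hn2]; ring
  have dA2r : HasDerivAt
      (fun x : ℝ => 1 / x ^ ((n-1)/2) *
        (x ^ ((3*n-1)/2) * pr * pφ + k1 * Real.sin ((n-1)*φ/2) - k2 * Real.cos ((n-1)*φ/2)))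
      (n*t^2*pr*pφ - (n-1)/2*(k1 * Real.sin ((n-1)*φ/2) - k2 * Real.cos ((n-1)*φ/2))/(t*r)) r := by
    have hleft := (hasDerivAt_const r (1:ℝ)).div
      (Real.hasDerivAt_rpow_const (p := (n-1)/2) (Or.inl hrne)) (Real.rpow_pos_of_pos hr _).ne'
    have hright := ((((Real.hasDerivAt_rpow_const (p := (3*n-1)/2) (Or.inl hrne)).mul_const
        pr).mul_const pφ).add_const (k1 * Real.sin ((n-1)*φ/2))).sub_const
        (k2 * Real.cos ((n-1)*φ/2))
    refine (hleft.mul hright).congr_deriv ?_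
    simp only [hs1, hm, hm1, ← htdef, Pi.mul_apply, Pi.div_apply]
    field_simp
    ring
  have eAr : deriv (fun x => An n k0 k1 k2 x φ pr pφ) r
      = (((n-1)*t^2*pφ^2/r : ℝ) : ℂ) + Complex.I *
        ((n*t^2*pr*pφ - (n-1)/2*(k1 * Real.sin ((n-1)*φ/2) - k2 * Real.cos ((n-1)*φ/2))/(t*r) : ℝ) : ℂ) :=
    HasDerivAt.deriv ((dA1r.ofReal_comp).add ((dA2r.ofReal_comp).const_mul Complex.I))
  have dA1pr : HasDerivAt (fun _ : ℝ => r ^ (n-1) * pφ^2 + k0) (0:ℝ) pr :=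
    hasDerivAt_const pr _
  have dA2pr : HasDerivAt
      (fun x : ℝ => 1 / r ^ ((n-1)/2) *
        (r ^ ((3*n-1)/2) * x * pφ + k1 * Real.sin ((n-1)*φ/2) - k2 * Real.cos ((n-1)*φ/2)))
      (t^2*r*pφ) pr := by
    have h := (((((hasDerivAt_id pr).const_mul (r ^ ((3*n-1)/2))).mul_const pφ).add_const
        (k1 * Real.sin ((n-1)*φ/2))).sub_const (k2 * Real.cos ((n-1)*φ/2))).const_mul
        (1 / r ^ ((n-1)/2))
    refine h.congr_deriv ?_
    simp only [hm, ← htdef]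
    field_simp
  have eApr : deriv (fun x => An n k0 k1 k2 r φ x pφ) pr
      = ((0:ℝ) : ℂ) + Complex.I * ((t^2*r*pφ : ℝ) : ℂ) :=
    HasDerivAt.deriv ((dA1pr.ofReal_comp).add ((dA2pr.ofReal_comp).const_mul Complex.I))
  have dA1pp : HasDerivAt (fun x : ℝ => r ^ (n-1) * x^2 + k0) (2*t^2*pφ) pφ := by
    have h := ((hasDerivAt_pow 2 pφ).const_mul (r ^ (n-1))).add_const k0
    refine h.congr_deriv ?_
    rw [hn1]; push_cast; ring
  have dA2pp : HasDerivAt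
      (fun x : ℝ => 1 / r ^ ((n-1)/2) *
        (r ^ ((3*n-1)/2) * pr * x + k1 * Real.sin ((n-1)*φ/2) - k2 * Real.cos ((n-1)*φ/2)))
      (t^2*r*pr) pφ := by
    have h := ((((hasDerivAt_id pφ).const_mul (r ^ ((3*n-1)/2) * pr)).add_const
        (k1 * Real.sin ((n-1)*φ/2))).sub_const (k2 * Real.cos ((n-1)*φ/2))).const_mul
        (1 / r ^ ((n-1)/2))
    refine h.congr_deriv ?_
    simp only [hm, ← htdef]
    field_simp
  have eApp : deriv (fun x => An n k0 k1 k2 r φ pr x) pφ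
      = ((2*t^2*pφ : ℝ) : ℂ) + Complex.I * ((t^2*r*pr : ℝ) : ℂ) :=
    HasDerivAt.deriv ((dA1pp.ofReal_comp).add ((dA2pp.ofReal_comp).const_mul Complex.I))
  have dA1phi : HasDerivAt (fun _ : ℝ => r ^ (n-1) * pφ^2 + k0) (0:ℝ) φ :=
    hasDerivAt_const φ _
  have dA2phi : HasDerivAt
      (fun x : ℝ => 1 / r ^ ((n-1)/2) *
        (r ^ ((3*n-1)/2) * pr * pφ + k1 * Real.sin ((n-1)*x/2) - k2 * Real.cos ((n-1)*x/2)))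
      ((n-1)/2*(k1 * Real.cos ((n-1)*φ/2) + k2 * Real.sin ((n-1)*φ/2))/t) φ := by
    have h := (((hl.sin.const_mul k1).const_add (r ^ ((3*n-1)/2) * pr * pφ)).sub
        (hl.cos.const_mul k2)).const_mul (1 / r ^ ((n-1)/2))
    refine h.congr_deriv ?_
    simp only [← htdef]
    field_simp
    ring
  have eAphi : deriv (fun x => An n k0 k1 k2 r x pr pφ) φ
      = ((0:ℝ) : ℂ) + Complex.I *
        (((n-1)/2*(k1 * Real.cos ((n-1)*φ/2) + k2 * Real.sin ((n-1)*φ/2))/t : ℝ) : ℂ) :=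
    HasDerivAt.deriv ((dA1phi.ofReal_comp).add ((dA2phi.ofReal_comp).const_mul Complex.I))
  -- derivatives of Nphi
  have eNr : deriv (fun x => Nphi n x φ pr pφ) r = 0 := by
    simp [Nphi]
  have eNpr : deriv (fun x => Nphi n r φ x pφ) pr = 0 := by
    simp [Nphi]
  have eNpp : deriv (fun x => Nphi n r φ pr x) pφ = 0 := by
    simp [Nphi]
  have hl2 : HasDerivAt (fun x : ℝ => (n-1)*x) ((n-1)*1) φ :=
    (hasDerivAt_id φ).const_mul (n-1)
  have eNphi : deriv (fun x => Nphi n r x pr pφ) φ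
      = ((-((n-1) * Real.sin ((n-1)*φ)) : ℝ) : ℂ)
        + Complex.I * (((n-1) * Real.cos ((n-1)*φ) : ℝ) : ℂ) := by
    refine HasDerivAt.deriv (HasDerivAt.congr_deriv
      ((hl2.cos.ofReal_comp).add ((hl2.sin.ofReal_comp).const_mul Complex.I)) ?_)
    push_cast
    ring
  constructor
  · simp only [pbC]
    rw [eAr, eApr, eAphi, eApp, eHr, eHpr, eHpp, eHphi]
    simp only [An, h2n2, hn1, hm, ← htdef]
    simp only [Complex.ext_iff, Complex.add_re, Complex.add_im, Complex.mul_re, Complex.mul_im,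
      Complex.sub_re, Complex.sub_im, Complex.neg_re, Complex.neg_im, Complex.I_re,
      Complex.I_im, Complex.ofReal_re, Complex.ofReal_im, mul_zero, zero_mul, mul_one, one_mul,
      sub_zero, zero_sub, add_zero, zero_add, neg_zero, neg_neg]
    constructor
    · field_simp
      ring
    · field_simp
      ring
  · simp only [pbC]
    rw [eNr, eNpr, eNphi, eNpp, eHr, eHpr, eHpp, eHphi]
    simp only [Nphi, h2n2, ← htdef]
    simp only [Complex.ext_iff, Complex.add_re, Complex.add_im, Complex.mul_re, Complex.mul_im,
      Complex.sub_re, Complex.sub_im, Complex.neg_re, Complex.neg_im, Complex.I_re,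
      Complex.I_im, Complex.ofReal_re, Complex.ofReal_im, mul_zero, zero_mul, mul_one, one_mul,
      sub_zero, zero_sub, add_zero, zero_add, neg_zero, neg_neg]
    constructor
    · ring
    · ring
end
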